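/- Let (Xₙ)ₙ≥1 be a balanced MVPS(θ, ν, R) with probability kernel R (R_x(X) = 1 for all x). If for all measurable A, B: ∫ R_x(A) ν(dx) = ν(A) (stationarity) and, for ν-a.e. x, ∫ R_y(A) R_x(dy) = R_x(A) (self-averaging), then (Xₙ) is conditionally identically distributed: for every n ≥ 0 and measurable A, P(X_{n+2} ∈ A | X₁,…,Xₙ) = P(X_{n+1} ∈ A | X₁,…,Xₙ) almost surely. -/

import Mathlib

open MeasureTheory ProbabilityTheory Finset
open scoped ENNReal

/-- For a balanced MVPS with probability-kernel reinforcement `R`, if `R` is stationary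
w.r.t. `ν` and self-averaging, then the process is conditionally identically distributed:
`P(X_{n+2} ∈ A | X₁,…,Xₙ) = P(X_{n+1} ∈ A | X₁,…,Xₙ)` a.s. for every measurable `A`. -/
theorem balanced_mvps_stationary_self_averaging_cid
    {Ω X : Type*} [MeasurableSpace Ω] [MeasurableSpace X] [StandardBorelSpace X]
    (P : Measure Ω) [IsProbabilityMeasure P]
    (ν : Measure X) [IsProbabilityMeasure ν]
    (θ : ℝ) (hθ : 0 < θ)
    (R : Kernel X X) [IsMarkovKernel R]
    (Xseq : ℕ → Ω → X) (hXmeas : ∀ n, Measurable (Xseq n))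
    -- X₁ ∼ ν
    (hinit : Measure.map (Xseq 0) P = ν)
    -- predictive distributions of the balanced MVPS, in integrated (test-set) form
    (hpred : ∀ n : ℕ, ∀ A : Set X, MeasurableSet A →
      ∀ S : Set (Fin n → X), MeasurableSet S →
      ∫ ω, Set.indicator A (fun _ => (1 : ℝ)) (Xseq n ω) *
          Set.indicator S (fun _ => (1 : ℝ)) (fun i : Fin n => Xseq i ω) ∂P
        = ∫ ω, ((θ * (ν A).toReal + ∑ i ∈ range n, (R (Xseq i ω) A).toReal) / (θ + n)) *
            Set.indicator S (fun _ => (1 : ℝ)) (fun i : Fin n => Xseq i ω) ∂P)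
    -- stationarity of R w.r.t. ν
    (hstat : ∀ A : Set X, MeasurableSet A → ∫⁻ x, R x A ∂ν = ν A)
    -- self-averaging of R, ν-a.e.
    (hself : ∀ᵐ x ∂ν, ∀ A : Set X, MeasurableSet A → ∫⁻ y, R y A ∂(R x) = R x A) :
    ∀ n : ℕ, ∀ A : Set X, MeasurableSet A →
      (P[(fun ω => Set.indicator A (fun _ => (1 : ℝ)) (Xseq (n + 1) ω)) |
          MeasurableSpace.comap (fun ω (i : Fin n) => Xseq i ω) inferInstance])
        =ᵐ[P]
      (P[(fun ω => Set.indicator A (fun _ => (1 : ℝ)) (Xseq n ω)) |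
          MeasurableSpace.comap (fun ω (i : Fin n) => Xseq i ω) inferInstance]) := by
  classical
  intro n A hA
  have hRmeas : ∀ (B : Set X), MeasurableSet B → Measurable fun x => R x B :=
    fun B hB => R.measurable_coe hB
  have hbint : ∀ (f : Ω → ℝ) (C : ℝ), Measurable f → (∀ ω, |f ω| ≤ C) → Integrable f P := by
    intro f C hf hC
    exact (integrable_const C).mono' hf.aestronglyMeasurable
      (ae_of_all _ fun ω => by simpa [Real.norm_eq_abs] using hC ω)
  have htR1 : ∀ (μ : Measure X) [IsProbabilityMeasure μ] (B : Set X), (μ B).toReal ≤ 1 := by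
    intro μ _ B
    have h1 : (μ B).toReal ≤ (1 : ℝ≥0∞).toReal :=
      ENNReal.toReal_mono ENNReal.one_ne_top prob_le_one
    simpa using h1
  have hrbound : ∀ (i : ℕ) (B : Set X) (ω : Ω), (R (Xseq i ω) B).toReal ≤ 1 :=
    fun i B ω => htR1 (R (Xseq i ω)) B
  have hrint : ∀ (i : ℕ) (B : Set X), MeasurableSet B →
      Integrable (fun ω => (R (Xseq i ω) B).toReal) P :=
    fun i B hB => hbint _ 1 (((hRmeas B hB).comp (hXmeas i)).ennreal_toReal)
      (fun ω => by rw [abs_of_nonneg ENNReal.toReal_nonneg]; exact hrbound i B ω)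
  -- Step 1: all marginals are ν
  have hlaw : ∀ i, Measure.map (Xseq i) P = ν := by
    intro i
    induction i using Nat.strong_induction_on with
    | _ i ih =>
    refine Measure.ext fun B hB => ?_
    rw [Measure.map_apply (hXmeas i) hB]
    have h := hpred i B hB Set.univ MeasurableSet.univ
    simp only [Set.indicator_univ, mul_one] at h
    have hind : (fun ω => Set.indicator B (fun _ => (1:ℝ)) (Xseq i ω))
        = Set.indicator (Xseq i ⁻¹' B) (fun _ => (1:ℝ)) := by
      funext ω
      by_cases hω : Xseq i ω ∈ B <;> simp [Set.indicator_apply, hω]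
    rw [hind, integral_indicator_const (1:ℝ) (hXmeas i hB), smul_eq_mul, mul_one] at h
    have hval : ∀ j ∈ range i, ∫ ω, (R (Xseq j ω) B).toReal ∂P = (ν B).toReal := by
      intro j hj
      rw [← integral_map (hXmeas j).aemeasurable
        ((hRmeas B hB).ennreal_toReal.aestronglyMeasurable), ih j (mem_range.mp hj),
        integral_toReal (hRmeas B hB).aemeasurable (ae_of_all _ fun x => measure_lt_top _ _),
        hstat B hB]
    rw [integral_div, integral_add (integrable_const _)
        (integrable_finset_sum _ fun j _ => hrint j B hB),
      integral_const, integral_finset_sum _ (fun j _ => hrint j B hB),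
      Finset.sum_congr rfl hval, Finset.sum_const, card_range] at h
    have hpos : (0:ℝ) < θ + i := by positivity
    have hfin : (P (Xseq i ⁻¹' B)).toReal = (ν B).toReal := by
      rw [← measureReal_def, h]
      simp only [measureReal_def, measure_univ, ENNReal.toReal_one, smul_eq_mul, one_mul, nsmul_eq_mul]
      field_simp
    exact (ENNReal.toReal_eq_toReal_iff' (measure_ne_top _ _) (measure_ne_top _ _)).mp hfin
  -- notation
  set πn : Ω → (Fin n → X) := fun ω (i : Fin n) => Xseq i ω with hπdef
  have hπ : Measurable πn := measurable_pi_lambda _ fun i => hXmeas i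
  have hm : MeasurableSpace.comap πn inferInstance ≤ ‹MeasurableSpace Ω› := hπ.comap_le
  -- core set-integral equality
  have hcore : ∀ S : Set (Fin n → X), MeasurableSet S →
      ∫ ω in πn ⁻¹' S, Set.indicator A (fun _ => (1:ℝ)) (Xseq (n+1) ω) ∂P
        = ∫ ω in πn ⁻¹' S, Set.indicator A (fun _ => (1:ℝ)) (Xseq n ω) ∂P := by
    intro S hS
    set s : Set Ω := πn ⁻¹' S with hsdef
    have hs : MeasurableSet s := hπ hS
    have hset : ∀ f : Ω → ℝ, ∫ ω in s, f ω ∂P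
        = ∫ ω, f ω * Set.indicator S (fun _ => (1:ℝ)) (πn ω) ∂P := by
      intro f
      rw [← integral_indicator hs]
      congr 1
      funext ω
      by_cases hω : πn ω ∈ S
      · simp [Set.indicator_apply, hω, hsdef, Set.mem_preimage]
      · simp [Set.indicator_apply, hω, hsdef, Set.mem_preimage]
    -- the predictive kernel
    have hc0 : ENNReal.ofReal (θ + n) ≠ 0 := (ENNReal.ofReal_pos.mpr (by positivity)).ne'
    set c : ℝ≥0∞ := ENNReal.ofReal (θ + n) with hcdef
    set κ : Ω → Measure X :=
      fun ω => c⁻¹ • (ENNReal.ofReal θ • ν + ∑ i ∈ range n, R (Xseq i ω)) with hκdef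
    have hκapp : ∀ (ω : Ω) (B : Set X),
        κ ω B = c⁻¹ * (ENNReal.ofReal θ * ν B + ∑ i ∈ range n, R (Xseq i ω) B) := by
      intro ω B
      simp [hκdef, Measure.smul_apply, Measure.add_apply, Measure.finset_sum_apply,
        smul_eq_mul, mul_add]
    have hκmeas : Measurable κ := by
      refine Measure.measurable_of_measurable_coe _ fun B hB => ?_
      simp only [hκapp]
      exact (measurable_const.add
        (Finset.measurable_sum _ fun i _ => (hRmeas B hB).comp (hXmeas i))).const_mul _
    have hκle : ∀ (ω : Ω) (B : Set X), κ ω B ≤ 1 := by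
      intro ω B
      rw [hκapp]
      have h1 : ENNReal.ofReal θ * ν B + ∑ i ∈ range n, R (Xseq i ω) B ≤ c := by
        calc ENNReal.ofReal θ * ν B + ∑ i ∈ range n, R (Xseq i ω) B
            ≤ ENNReal.ofReal θ * 1 + ∑ i ∈ range n, 1 := by
              gcongr with i hi
              exacts [prob_le_one, prob_le_one]
          _ = c := by
              rw [mul_one, Finset.sum_const, card_range, nsmul_eq_mul, mul_one, hcdef,
                ENNReal.ofReal_add hθ.le (Nat.cast_nonneg n), ENNReal.ofReal_natCast]
      calc c⁻¹ * (ENNReal.ofReal θ * ν B + ∑ i ∈ range n, R (Xseq i ω) B)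
          ≤ c⁻¹ * c := by gcongr
        _ ≤ 1 := le_of_eq (ENNReal.inv_mul_cancel hc0 ENNReal.ofReal_ne_top)
    have hκfin : ∀ (ω : Ω) (B : Set X), κ ω B ≠ ∞ :=
      fun ω B => ((hκle ω B).trans_lt ENNReal.one_lt_top).ne
    have hκtoReal : ∀ (ω : Ω) (B : Set X), (κ ω B).toReal
        = (θ * (ν B).toReal + ∑ i ∈ range n, (R (Xseq i ω) B).toReal) / (θ + (n:ℝ)) := by
      intro ω B
      rw [hκapp, ENNReal.toReal_mul, ENNReal.toReal_inv, hcdef,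
        ENNReal.toReal_ofReal (by positivity),
        ENNReal.toReal_add (ENNReal.mul_ne_top ENNReal.ofReal_ne_top (measure_ne_top _ _))
          (by exact (ENNReal.sum_lt_top.mpr fun i _ => measure_lt_top _ _).ne),
        ENNReal.toReal_mul, ENNReal.toReal_ofReal hθ.le,
        ENNReal.toReal_sum (fun i _ => measure_ne_top _ _), inv_mul_eq_div]
    -- the two relevant measures on X
    set ρ₁ : Measure X := Measure.map (Xseq n) (P.restrict s) with hρ₁
    set ρ₂ : Measure X := (P.restrict s).bind κ with hρ₂
    have happly : ∀ (B : Set X), MeasurableSet B → (P (Xseq n ⁻¹' B ∩ s)).toReal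
        = ∫ ω, Set.indicator B (fun _ => (1:ℝ)) (Xseq n ω)
            * Set.indicator S (fun _ => (1:ℝ)) (πn ω) ∂P := by
      intro B hB
      have hi : (fun ω => Set.indicator B (fun _ => (1:ℝ)) (Xseq n ω)
            * Set.indicator S (fun _ => (1:ℝ)) (πn ω))
          = Set.indicator (Xseq n ⁻¹' B ∩ s) (fun _ => (1:ℝ)) := by
        funext ω
        by_cases h1 : Xseq n ω ∈ B
        · by_cases h2 : πn ω ∈ S
          · simp [Set.indicator_apply, h1, h2, hsdef, Set.mem_preimage]
          · simp [Set.indicator_apply, h1, h2, hsdef, Set.mem_preimage]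
        · by_cases h2 : πn ω ∈ S
          · simp [Set.indicator_apply, h1, h2, hsdef, Set.mem_preimage]
          · simp [Set.indicator_apply, h1, h2, hsdef, Set.mem_preimage]
      rw [hi, integral_indicator_const (1:ℝ) ((hXmeas n hB).inter hs), smul_eq_mul, mul_one, measureReal_def]
    have hρeq : ρ₁ = ρ₂ := by
      refine Measure.ext fun B hB => ?_
      have hL : ρ₁ B = P (Xseq n ⁻¹' B ∩ s) := by
        rw [hρ₁, Measure.map_apply (hXmeas n) hB, Measure.restrict_apply (hXmeas n hB)]
      have hRa : ρ₂ B = ∫⁻ ω in s, κ ω B ∂P := Measure.bind_apply hB hκmeas.aemeasurable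
      have hRfin : ∫⁻ ω in s, κ ω B ∂P ≠ ∞ := by
        refine ((lintegral_mono fun ω => hκle ω B).trans_lt ?_).ne
        rw [setLIntegral_one]
        exact measure_lt_top P s
      have h2 : ∫ ω in s, (κ ω B).toReal ∂P = (∫⁻ ω in s, κ ω B ∂P).toReal :=
        integral_toReal ((Measure.measurable_coe hB).comp hκmeas).aemeasurable
          (ae_of_all _ fun ω => (hκle ω B).trans_lt ENNReal.one_lt_top)
      have h := hpred n B hB S hS
      simp only [← hπdef] at h
      rw [← happly B hB] at h
      have h3 : ∫ ω, ((θ * (ν B).toReal + ∑ i ∈ range n, (R (Xseq i ω) B).toReal) / (θ + (n:ℝ)))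
            * Set.indicator S (fun _ => (1:ℝ)) (πn ω) ∂P = ∫ ω in s, (κ ω B).toReal ∂P := by
        rw [hset]
        simp only [hκtoReal]
      rw [h3, h2] at h
      rw [hL, hRa]
      exact (ENNReal.toReal_eq_toReal_iff' (measure_ne_top _ _) hRfin).mp h
    -- self-averaging along the process
    have hselfω : ∀ i ∈ range n, ∀ᵐ ω ∂P,
        ∫⁻ y, R y A ∂(R (Xseq i ω)) = R (Xseq i ω) A := by
      intro i _
      have h' : ∀ᵐ x ∂(Measure.map (Xseq i) P), ∀ B : Set X, MeasurableSet B →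
          ∫⁻ y, R y B ∂(R x) = R x B := by rw [hlaw i]; exact hself
      filter_upwards [ae_of_ae_map (hXmeas i).aemeasurable h'] with ω hω using hω A hA
    have hκint : ∀ᵐ ω ∂P, ∫⁻ y, R y A ∂(κ ω) = κ ω A := by
      have hall : ∀ᵐ ω ∂P, ∀ i ∈ range n,
          ∫⁻ y, R y A ∂(R (Xseq i ω)) = R (Xseq i ω) A := by
        exact (Filter.eventually_all_finset (range n)).mpr hselfω
      filter_upwards [hall] with ω hω
      have hκs : κ ω = c⁻¹ • (ENNReal.ofReal θ • ν + ∑ i ∈ range n, R (Xseq i ω)) := by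
        rw [hκdef]
      rw [hκs, lintegral_smul_measure, lintegral_add_measure,
        lintegral_finset_sum_measure, lintegral_smul_measure, hstat A hA, hκapp ω A]
      congr 2
      exact Finset.sum_congr rfl hω
    -- key identity
    have hkey : ∫⁻ ω in s, R (Xseq n ω) A ∂P = P (Xseq n ⁻¹' A ∩ s) := by
      have hl1 : ∫⁻ ω in s, R (Xseq n ω) A ∂P = ∫⁻ y, R y A ∂ρ₁ := by
        rw [hρ₁, lintegral_map (hRmeas A hA) (hXmeas n)]
      have hl2 : ∫⁻ y, R y A ∂ρ₂ = ∫⁻ ω in s, κ ω A ∂P := by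
        rw [hρ₂, Measure.lintegral_bind hκmeas.aemeasurable (hRmeas A hA).aemeasurable]
        exact lintegral_congr_ae (ae_restrict_of_ae hκint)
      have hl3 : ∫⁻ ω in s, κ ω A ∂P = ρ₂ A := (Measure.bind_apply hA hκmeas.aemeasurable).symm
      have hl4 : ρ₁ A = P (Xseq n ⁻¹' A ∩ s) := by
        rw [hρ₁, Measure.map_apply (hXmeas n) hA, Measure.restrict_apply (hXmeas n hA)]
      rw [hl1, hρeq, hl2, hl3, ← hρeq, hl4]
    -- real version of the key identity
    have hkeyR : ∫ ω, (R (Xseq n ω) A).toReal * Set.indicator S (fun _ => (1:ℝ)) (πn ω) ∂P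
        = ∫ ω, Set.indicator A (fun _ => (1:ℝ)) (Xseq n ω)
            * Set.indicator S (fun _ => (1:ℝ)) (πn ω) ∂P := by
      calc ∫ ω, (R (Xseq n ω) A).toReal * Set.indicator S (fun _ => (1:ℝ)) (πn ω) ∂P
          = ∫ ω in s, (R (Xseq n ω) A).toReal ∂P := (hset _).symm
        _ = (∫⁻ ω in s, R (Xseq n ω) A ∂P).toReal :=
            integral_toReal ((hRmeas A hA).comp (hXmeas n)).aemeasurable
              (ae_of_all _ fun ω => measure_lt_top _ _)
        _ = (P (Xseq n ⁻¹' A ∩ s)).toReal := by rw [hkey]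
        _ = _ := happly A hA
    -- integrability facts
    have hindmeas : Measurable (fun ω => Set.indicator S (fun _ => (1:ℝ)) (πn ω)) :=
      (measurable_const.indicator hS).comp hπ
    have hindb : ∀ ω, |Set.indicator S (fun _ => (1:ℝ)) (πn ω)| ≤ 1 := by
      intro ω; by_cases h : πn ω ∈ S <;> simp [Set.indicator_apply, h]
    have hFmeas : Measurable (fun ω =>
        θ * (ν A).toReal + ∑ i ∈ range n, (R (Xseq i ω) A).toReal) := measurable_const.add
      (Finset.measurable_sum _ fun i _ => ((hRmeas A hA).comp (hXmeas i)).ennreal_toReal)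
    have hFnonneg : ∀ ω : Ω, 0 ≤ θ * (ν A).toReal + ∑ i ∈ range n, (R (Xseq i ω) A).toReal :=
      fun ω => add_nonneg (mul_nonneg hθ.le ENNReal.toReal_nonneg)
        (Finset.sum_nonneg fun i _ => ENNReal.toReal_nonneg)
    have hFbound : ∀ ω : Ω,
        |θ * (ν A).toReal + ∑ i ∈ range n, (R (Xseq i ω) A).toReal| ≤ θ + n := by
      intro ω
      rw [abs_of_nonneg (hFnonneg ω)]
      have h1 : θ * (ν A).toReal + ∑ i ∈ range n, (R (Xseq i ω) A).toReal
          ≤ θ * 1 + ∑ i ∈ range n, (1:ℝ) :=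
        add_le_add (mul_le_mul_of_nonneg_left (htR1 ν A) hθ.le)
          (Finset.sum_le_sum fun i _ => hrbound i A ω)
      simpa using h1
    have hintF : Integrable (fun ω =>
        (θ * (ν A).toReal + ∑ i ∈ range n, (R (Xseq i ω) A).toReal)
          * Set.indicator S (fun _ => (1:ℝ)) (πn ω)) P := by
      refine hbint _ (θ + n) (hFmeas.mul hindmeas) fun ω => ?_
      rw [abs_mul]
      calc |θ * (ν A).toReal + ∑ i ∈ range n, (R (Xseq i ω) A).toReal|
            * |Set.indicator S (fun _ => (1:ℝ)) (πn ω)| ≤ (θ + n) * 1 :=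
          mul_le_mul (hFbound ω) (hindb ω) (abs_nonneg _) (by positivity)
        _ = θ + n := mul_one _
    have hintr : Integrable (fun ω =>
        (R (Xseq n ω) A).toReal * Set.indicator S (fun _ => (1:ℝ)) (πn ω)) P := by
      refine hbint _ 1 ((((hRmeas A hA).comp (hXmeas n)).ennreal_toReal).mul hindmeas)
        fun ω => ?_
      rw [abs_mul]
      calc |(R (Xseq n ω) A).toReal| * |Set.indicator S (fun _ => (1:ℝ)) (πn ω)|
          ≤ 1 * 1 := mul_le_mul
            (by rw [abs_of_nonneg ENNReal.toReal_nonneg]; exact hrbound n A ω)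
            (hindb ω) (abs_nonneg _) one_pos.le
        _ = 1 := mul_one 1
    have hdiv : ∀ (d : ℝ) (f : Ω → ℝ),
        ∫ ω, (f ω / d) * Set.indicator S (fun _ => (1:ℝ)) (πn ω) ∂P
          = (∫ ω, f ω * Set.indicator S (fun _ => (1:ℝ)) (πn ω) ∂P) / d := by
      intro d f
      simp only [div_mul_eq_mul_div]
      exact integral_div d _
    -- predictive identity at time n
    have h0 := hpred n A hA S hS
    simp only [← hπdef] at h0
    rw [hdiv] at h0
    -- predictive identity at time n+1
    have hS' : MeasurableSet ((fun (f : Fin (n+1) → X) (i : Fin n) => f i.castSucc) ⁻¹' S) :=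
      (measurable_pi_lambda _ fun i => measurable_pi_apply _) hS
    have h1 := hpred (n+1) A hA _ hS'
    have hindeq : ∀ ω : Ω, Set.indicator
          ((fun (f : Fin (n+1) → X) (i : Fin n) => f i.castSucc) ⁻¹' S)
          (fun _ => (1:ℝ)) (fun i : Fin (n+1) => Xseq i ω)
        = Set.indicator S (fun _ => (1:ℝ)) (πn ω) := by
      intro ω
      have he : (fun i : Fin n => Xseq ((i.castSucc : Fin (n+1)) : ℕ) ω) = πn ω := by
        funext i
        rw [hπdef]
        simp
      simp only [Set.indicator_apply, Set.mem_preimage]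
      rw [he]
    simp only [hindeq] at h1
    simp only [Finset.sum_range_succ, ← add_assoc] at h1
    push_cast at h1
    rw [hdiv] at h1
    have hsplit : ∫ ω, (θ * (ν A).toReal + ∑ i ∈ range n, (R (Xseq i ω) A).toReal
          + (R (Xseq n ω) A).toReal) * Set.indicator S (fun _ => (1:ℝ)) (πn ω) ∂P
        = (∫ ω, (θ * (ν A).toReal + ∑ i ∈ range n, (R (Xseq i ω) A).toReal)
            * Set.indicator S (fun _ => (1:ℝ)) (πn ω) ∂P)
          + ∫ ω, (R (Xseq n ω) A).toReal * Set.indicator S (fun _ => (1:ℝ)) (πn ω) ∂P := by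
      rw [← integral_add hintF hintr]
      congr 1
      funext ω
      ring
    rw [hsplit, hkeyR, h0] at h1
    rw [hset, hset, h1, h0]
    have hd1 : (0:ℝ) < θ + n := by positivity
    have hd2 : (0:ℝ) < θ + n + 1 := by positivity
    field_simp
    ring
  -- conclude via uniqueness of conditional expectation
  have hInd : ∀ k : ℕ, Integrable (fun ω => Set.indicator A (fun _ => (1:ℝ)) (Xseq k ω)) P := by
    intro k
    have hi : (fun ω => Set.indicator A (fun _ => (1:ℝ)) (Xseq k ω))
        = Set.indicator (Xseq k ⁻¹' A) (fun _ => (1:ℝ)) := by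
      funext ω
      by_cases h : Xseq k ω ∈ A <;> simp [Set.indicator_apply, h]
    rw [hi]
    exact (integrable_const (1:ℝ)).indicator (hXmeas k hA)
  refine (ae_eq_condExp_of_forall_setIntegral_eq hm (hInd (n+1))
    (fun t _ _ => integrable_condExp.integrableOn) (fun t ht _ => ?_)
    (StronglyMeasurable.aestronglyMeasurable stronglyMeasurable_condExp)).symm
  obtain ⟨S, hS, rfl⟩ := MeasurableSpace.measurableSet_comap.mp ht
  rw [setIntegral_condExp hm (hInd n) ht]
  exact (hcore S hS).symm
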